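/- Let d, h be positive integers, W_x a real d×(1+h) matrix, W_f, W_i, W_m real h×(1+d+h) matrices, and fix s ∈ ℝ^h (the previous hidden state) and c ∈ ℝ^h (the previous cell state). Define the output map g : ℝ^h → ℝ^d by g(u) = tanh applied entrywise to W_x·(1,u), and the cell-update map Φ : ℝ^d → ℝ^h by Φ(x) = σ_s(W_f·(1,x,s)) ⊙ c + σ_s(W_i·(1,x,s)) ⊙ tanh(W_m·(1,x,s)), where σ_s(t) = 1/(1+e^{−t}) and tanh are applied entrywise and ⊙ is the entrywise product. Set K = ‖W_f‖·‖c‖_∞ + ‖W_i‖ + ‖W_m‖ and assume K > 0 and ‖W_x‖ > 0. Then for any λ ∈ ℝ and any s_t, s_t' ∈ ℝ^h and x, x' ∈ ℝ^d such that ‖g(s_t) − g(s_t')‖_∞ ≥ e^{λ}·‖x − x'‖_∞, one has ‖s_t − s_t'‖_∞ ≥ (e^{λ}/(‖W_x‖·K))·‖Φ(x) − Φ(x')‖_∞. -/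

import Mathlib

open scoped BigOperators

/-- The operator norm of a real matrix induced by the sup norms, i.e. the
maximum absolute row sum `max_i Σ_j |W i j|`. -/
noncomputable def supRowSum {m n : ℕ} (W : Matrix (Fin m) (Fin n) ℝ) : ℝ :=
  ⨆ i, ∑ j, |W i j|

/-- The logistic sigmoid `σ_s(t) = 1/(1+e^{-t})`. -/
noncomputable def sigmoid (t : ℝ) : ℝ := 1 / (1 + Real.exp (-t))

/-- The vector `(1, u) ∈ ℝ^{1+h}` obtained by prepending the constant entry 1. -/
def oneVec {h : ℕ} (u : Fin h → ℝ) : Fin (1 + h) → ℝ :=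
  Fin.append ![(1 : ℝ)] u

/-- The vector `(1, x, s) ∈ ℝ^{1+d+h}` obtained by concatenating 1, x and s. -/
def oneVec2 {d h : ℕ} (x : Fin d → ℝ) (s : Fin h → ℝ) : Fin (1 + d + h) → ℝ :=
  Fin.append (Fin.append ![(1 : ℝ)] x) s

section Helpers

lemma tanh_lip : LipschitzWith 1 Real.tanh := by
  have hd : ∀ x : ℝ, HasDerivAt Real.tanh (1 / Real.cosh x ^ 2) x := by
    intro x
    have h : HasDerivAt (fun x => Real.sinh x / Real.cosh x)
        ((Real.cosh x * Real.cosh x - Real.sinh x * Real.sinh x) / Real.cosh x ^ 2) x :=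
      (Real.hasDerivAt_sinh x).div (Real.hasDerivAt_cosh x) (Real.cosh_pos x).ne'
    have : Real.cosh x * Real.cosh x - Real.sinh x * Real.sinh x = 1 := by
      have := Real.cosh_sq_sub_sinh_sq x; nlinarith
    have heq : Real.tanh = fun x => Real.sinh x / Real.cosh x :=
      funext Real.tanh_eq_sinh_div_cosh
    rw [heq]
    simpa [this] using h
  apply lipschitzWith_of_nnnorm_deriv_le (fun x => (hd x).differentiableAt)
  intro x
  rw [(hd x).deriv]
  have h1 := Real.one_le_cosh x
  rw [← NNReal.coe_le_coe]
  simp only [coe_nnnorm, Real.norm_eq_abs, NNReal.coe_one]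
  rw [abs_of_nonneg (by positivity : (0:ℝ) ≤ 1 / Real.cosh x ^ 2), div_le_one (by positivity)]
  nlinarith

lemma sig_lip : LipschitzWith 1 sigmoid := by
  have hd : ∀ x : ℝ, HasDerivAt sigmoid (Real.exp (-x) / (1 + Real.exp (-x)) ^ 2) x := by
    intro x
    have hpos : (0:ℝ) < 1 + Real.exp (-x) := by positivity
    have h : HasDerivAt (fun x : ℝ => 1 + Real.exp (-x)) (-Real.exp (-x)) x := by
      simpa using (((Real.hasDerivAt_exp (-x)).comp x (hasDerivAt_neg x)).const_add 1)
    have := h.inv hpos.ne'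
    have heq : sigmoid = fun x : ℝ => (1 + Real.exp (-x))⁻¹ := by
      funext y; simp [sigmoid, one_div]
    rw [heq]
    simpa [Pi.inv_def] using this
  apply lipschitzWith_of_nnnorm_deriv_le (fun x => (hd x).differentiableAt)
  intro x
  rw [(hd x).deriv]
  have he := Real.exp_pos (-x)
  rw [← NNReal.coe_le_coe]
  simp only [coe_nnnorm, Real.norm_eq_abs, NNReal.coe_one]
  rw [abs_of_nonneg (by positivity : (0:ℝ) ≤ Real.exp (-x) / (1 + Real.exp (-x)) ^ 2),
    div_le_one (by positivity)]
  nlinarith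

lemma abs_tanh_le (x : ℝ) : |Real.tanh x| ≤ 1 := by
  have h := Real.cosh_sq_sub_sinh_sq x
  have hc := Real.cosh_pos x
  rw [Real.tanh_eq_sinh_div_cosh, abs_div, abs_of_pos hc, div_le_one hc, ← abs_of_pos hc,
    ← Real.sqrt_sq_eq_abs, ← Real.sqrt_sq_eq_abs]
  exact Real.sqrt_le_sqrt (by nlinarith)

lemma abs_sigmoid_le (x : ℝ) : |sigmoid x| ≤ 1 := by
  have he := Real.exp_pos (-x)
  rw [sigmoid, abs_div, abs_of_pos (show (0:ℝ) < 1 + Real.exp (-x) by positivity), abs_one,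
    div_le_one (by positivity)]
  linarith

lemma abs_tanh_sub (a b : ℝ) : |Real.tanh a - Real.tanh b| ≤ |a - b| := by
  simpa [Real.dist_eq] using tanh_lip.dist_le_mul a b

lemma abs_sigmoid_sub (a b : ℝ) : |sigmoid a - sigmoid b| ≤ |a - b| := by
  simpa [Real.dist_eq] using sig_lip.dist_le_mul a b

lemma rowSum_le_supRowSum {m n : ℕ} (W : Matrix (Fin m) (Fin n) ℝ) (i : Fin m) :
    ∑ j, |W i j| ≤ supRowSum W := by
  rw [supRowSum]
  exact le_ciSup (f := fun i => ∑ j, |W i j|) (Set.Finite.bddAbove (Set.finite_range _)) i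

lemma supRowSum_nonneg {m n : ℕ} (hm : 0 < m) (W : Matrix (Fin m) (Fin n) ℝ) :
    0 ≤ supRowSum W := by
  have i : Fin m := ⟨0, hm⟩
  exact le_trans (Finset.sum_nonneg fun j _ => abs_nonneg _) (rowSum_le_supRowSum W i)

lemma mulVec_diff_le {m n : ℕ} (W : Matrix (Fin m) (Fin n) ℝ) (v w : Fin n → ℝ)
    (r : ℝ) (hr : 0 ≤ r) (hvw : ∀ j, |v j - w j| ≤ r) (i : Fin m) :
    |W.mulVec v i - W.mulVec w i| ≤ supRowSum W * r := by
  have h1 : W.mulVec v i - W.mulVec w i = ∑ j, W i j * (v j - w j) := by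
    simp [Matrix.mulVec, dotProduct, mul_sub, Finset.sum_sub_distrib]
  rw [h1]
  calc |∑ j, W i j * (v j - w j)| ≤ ∑ j, |W i j * (v j - w j)| :=
        Finset.abs_sum_le_sum_abs _ _
    _ ≤ ∑ j, |W i j| * r := by
        refine Finset.sum_le_sum fun j _ => ?_
        rw [abs_mul]
        exact mul_le_mul_of_nonneg_left (hvw j) (abs_nonneg _)
    _ = (∑ j, |W i j|) * r := by rw [Finset.sum_mul]
    _ ≤ supRowSum W * r := mul_le_mul_of_nonneg_right (rowSum_le_supRowSum W i) hr

lemma oneVec_diff_le {h : ℕ} (u u' : Fin h → ℝ) (j : Fin (1 + h)) :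
    |oneVec u j - oneVec u' j| ≤ ‖u - u'‖ := by
  refine Fin.addCases (fun i => ?_) (fun k => ?_) j
  · simp only [oneVec, Fin.append_left]
    simp [norm_nonneg]
  · simp only [oneVec, Fin.append_right]
    simpa [Real.norm_eq_abs] using norm_le_pi_norm (u - u') k

lemma oneVec2_diff_le {d h : ℕ} (x x' : Fin d → ℝ) (s : Fin h → ℝ) (j : Fin (1 + d + h)) :
    |oneVec2 x s j - oneVec2 x' s j| ≤ ‖x - x'‖ := by
  refine Fin.addCases (fun i => ?_) (fun k => ?_) j
  · refine Fin.addCases (fun i0 => ?_) (fun k0 => ?_) i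
    · simp only [oneVec2, Fin.append_left]
      simp [norm_nonneg]
    · simp only [oneVec2, Fin.append_left, Fin.append_right]
      simpa [Real.norm_eq_abs] using norm_le_pi_norm (x - x') k0
  · simp only [oneVec2, Fin.append_right]
    simp [norm_nonneg]

end Helpers

theorem lstm_chaos_state_propagation
    (d h : ℕ) (hd : 0 < d) (hh : 0 < h)
    (Wx : Matrix (Fin d) (Fin (1 + h)) ℝ)
    (Wf Wi Wm : Matrix (Fin h) (Fin (1 + d + h)) ℝ)
    (s c : Fin h → ℝ)
    (g : (Fin h → ℝ) → Fin d → ℝ)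
    (hg : g = fun u i => Real.tanh (Wx.mulVec (oneVec u) i))
    (Φ : (Fin d → ℝ) → Fin h → ℝ)
    (hΦ : Φ = fun x i =>
      sigmoid (Wf.mulVec (oneVec2 x s) i) * c i
        + sigmoid (Wi.mulVec (oneVec2 x s) i) * Real.tanh (Wm.mulVec (oneVec2 x s) i))
    (K : ℝ)
    (hK : K = supRowSum Wf * ‖c‖ + supRowSum Wi + supRowSum Wm)
    (hKpos : 0 < K) (hWx : 0 < supRowSum Wx)
    (lam : ℝ) (st st' : Fin h → ℝ) (x x' : Fin d → ℝ)
    (hchaos : Real.exp lam * ‖x - x'‖ ≤ ‖g st - g st'‖) :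
    Real.exp lam / (supRowSum Wx * K) * ‖Φ x - Φ x'‖ ≤ ‖st - st'‖ := by
  set X := ‖x - x'‖ with hX
  set S := ‖st - st'‖ with hS
  have hXnn : 0 ≤ X := norm_nonneg _
  have hSnn : 0 ≤ S := norm_nonneg _
  have hcnn : 0 ≤ ‖c‖ := norm_nonneg _
  have hWfnn := supRowSum_nonneg hh Wf
  have hWinn := supRowSum_nonneg hh Wi
  have hWmnn := supRowSum_nonneg hh Wm
  -- bound on g
  have hG : ‖g st - g st'‖ ≤ supRowSum Wx * S := by
    rw [pi_norm_le_iff_of_nonneg (by positivity)]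
    intro i
    rw [Pi.sub_apply, hg, Real.norm_eq_abs]
    calc |Real.tanh (Wx.mulVec (oneVec st) i) - Real.tanh (Wx.mulVec (oneVec st') i)|
        ≤ |Wx.mulVec (oneVec st) i - Wx.mulVec (oneVec st') i| := abs_tanh_sub _ _
      _ ≤ supRowSum Wx * S :=
          mulVec_diff_le Wx _ _ S hSnn (oneVec_diff_le st st') i
  -- bound on Φ
  have hP : ‖Φ x - Φ x'‖ ≤ K * X := by
    rw [pi_norm_le_iff_of_nonneg (by positivity)]
    intro i
    rw [Pi.sub_apply, hΦ, Real.norm_eq_abs]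
    simp only
    set a := Wf.mulVec (oneVec2 x s) i
    set a' := Wf.mulVec (oneVec2 x' s) i
    set b := Wi.mulVec (oneVec2 x s) i
    set b' := Wi.mulVec (oneVec2 x' s) i
    set m := Wm.mulVec (oneVec2 x s) i
    set m' := Wm.mulVec (oneVec2 x' s) i
    have ha : |a - a'| ≤ supRowSum Wf * X :=
      mulVec_diff_le Wf _ _ X hXnn (oneVec2_diff_le x x' s) i
    have hb : |b - b'| ≤ supRowSum Wi * X :=
      mulVec_diff_le Wi _ _ X hXnn (oneVec2_diff_le x x' s) i
    have hm : |m - m'| ≤ supRowSum Wm * X :=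
      mulVec_diff_le Wm _ _ X hXnn (oneVec2_diff_le x x' s) i
    have hci : |c i| ≤ ‖c‖ := by
      simpa [Real.norm_eq_abs] using norm_le_pi_norm c i
    have step1 : |sigmoid a * c i - sigmoid a' * c i| ≤ supRowSum Wf * X * ‖c‖ := by
      rw [← sub_mul, abs_mul]
      exact mul_le_mul (le_trans (abs_sigmoid_sub a a') ha) hci (abs_nonneg _) (by positivity)
    have step2 : |sigmoid b * Real.tanh m - sigmoid b' * Real.tanh m'|
        ≤ supRowSum Wi * X + supRowSum Wm * X := by
      have hdecomp : sigmoid b * Real.tanh m - sigmoid b' * Real.tanh m'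
          = (sigmoid b - sigmoid b') * Real.tanh m + sigmoid b' * (Real.tanh m - Real.tanh m') := by
        ring
      rw [hdecomp]
      calc |(sigmoid b - sigmoid b') * Real.tanh m + sigmoid b' * (Real.tanh m - Real.tanh m')|
          ≤ |(sigmoid b - sigmoid b') * Real.tanh m| + |sigmoid b' * (Real.tanh m - Real.tanh m')| :=
            abs_add_le _ _
        _ ≤ |sigmoid b - sigmoid b'| * 1 + 1 * |Real.tanh m - Real.tanh m'| := by
            rw [abs_mul, abs_mul]
            exact add_le_add (mul_le_mul_of_nonneg_left (abs_tanh_le m) (abs_nonneg _))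
              (mul_le_mul_of_nonneg_right (abs_sigmoid_le b') (abs_nonneg _))
        _ ≤ supRowSum Wi * X + supRowSum Wm * X := by
            rw [mul_one, one_mul]
            exact add_le_add (le_trans (abs_sigmoid_sub b b') hb)
              (le_trans (abs_tanh_sub m m') hm)
    calc |sigmoid a * c i + sigmoid b * Real.tanh m
          - (sigmoid a' * c i + sigmoid b' * Real.tanh m')|
        = |(sigmoid a * c i - sigmoid a' * c i)
            + (sigmoid b * Real.tanh m - sigmoid b' * Real.tanh m')| := by ring_nf
      _ ≤ |sigmoid a * c i - sigmoid a' * c i|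
            + |sigmoid b * Real.tanh m - sigmoid b' * Real.tanh m'| := abs_add_le _ _
      _ ≤ supRowSum Wf * X * ‖c‖ + (supRowSum Wi * X + supRowSum Wm * X) :=
            add_le_add step1 step2
      _ = K * X := by rw [hK]; ring
  -- combine
  rw [div_mul_eq_mul_div, div_le_iff₀ (by positivity)]
  calc Real.exp lam * ‖Φ x - Φ x'‖ ≤ Real.exp lam * (K * X) :=
        mul_le_mul_of_nonneg_left hP (Real.exp_nonneg lam)
    _ = K * (Real.exp lam * X) := by ring
    _ ≤ K * ‖g st - g st'‖ := mul_le_mul_of_nonneg_left hchaos hKpos.le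
    _ ≤ K * (supRowSum Wx * S) := mul_le_mul_of_nonneg_left hG hKpos.le
    _ = S * (supRowSum Wx * K) := by ring
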